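/- arXiv:math/0311177 — 2 statements merged into one kernel-verified Lean document; each statement's English description precedes it below -/
import Mathlib

section
/- Let (W,S) and (W,S') be Coxeter systems for the same group W yielding the same reflections. Let s,t ∈ S with m := m(s,t) finite, and let s',t' ∈ S' and w ∈ W be such that w W_{{s,t}} w^{-1} = W_{{s',t'}}. Then, after possibly interchanging the roles of s' and t', there exist w' ∈ W with w' W_{{s,t}} w'^{-1} = W_{{s',t'}} and an integer j with 0 ≤ j ≤ ⌊(m−1)/4⌋ if m is even and 0 ≤ j ≤ (m−3)/2 if m is odd, such that w' s w'^{-1} = s' and w' t w'^{-1} = (t's')^{j} t' (s't')^{j}. In particular, if m ∈ {2,3,4} then w' can be chosen with w' s w'^{-1} = s' and w' t w'^{-1} = t'. -/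
open CoxeterSystem

namespace CoxRigid

variable {B B' W : Type*}

section Helpers
variable {W : Type*} [Group W]




lemma conj_zpow_inv {p q : W} (hp : p * p = 1) (hq : q * q = 1) (k : ℤ) :
    p * (p * q) ^ k * p = (p * q) ^ (-k) := by
  have hpinv : p⁻¹ = p := inv_eq_of_mul_eq_one_right hp
  have hqinv : q⁻¹ = q := inv_eq_of_mul_eq_one_right hq
  have h1 : p * (p * q) * p = (p * q)⁻¹ := by
    rw [mul_inv_rev, hpinv, hqinv]
    calc p * (p * q) * p = (p * p) * (q * p) := by group
    _ = q * p := by rw [hp, one_mul]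
  have h2 : ∀ x : W, p * x * p = (MulAut.conj p) x := by
    intro x; rw [MulAut.conj_apply, hpinv]
  rw [h2, map_zpow, ← h2, h1, inv_zpow, zpow_neg]

lemma conj_zpow_inv' {p q r : W} (hp : p * p = 1) (hq : q * q = 1) (hr : r = p * q) (k : ℤ) :
    p * r ^ k * p = r ^ (-k) := by subst hr; exact conj_zpow_inv hp hq k

lemma zpow_mul_invol {p q r : W} (hp : p * p = 1) (hq : q * q = 1) (hr : r = p * q) (k : ℤ) :
    r ^ k * p = p * r ^ (-k) := by
  have h := conj_zpow_inv' hp hq hr k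
  calc r ^ k * p = (p * p) * (r ^ k * p) := by rw [hp, one_mul]
    _ = p * (p * r ^ k * p) := by group
    _ = p * r ^ (-k) := by rw [h]

lemma invol_pr {p q r : W} (hp : p * p = 1) (hq : q * q = 1) (hr : r = p * q) (k : ℤ) :
    (p * r ^ k) * (p * r ^ k) = 1 := by
  calc (p * r ^ k) * (p * r ^ k) = (p * r ^ k * p) * r ^ k := by group
    _ = 1 := by rw [conj_zpow_inv' hp hq hr, ← zpow_add, neg_add_cancel, zpow_zero]

lemma mem_closure_pair {p q : W} (hp : p * p = 1) (hq : q * q = 1) {x : W}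
    (hx : x ∈ Subgroup.closure ({p, q} : Set W)) :
    (∃ k : ℤ, x = (p * q) ^ k) ∨ (∃ k : ℤ, x = p * (p * q) ^ k) := by
  induction hx using Subgroup.closure_induction with
  | mem y hy =>
    rcases hy with rfl | rfl
    · right; exact ⟨0, by simp⟩
    · right
      refine ⟨1, ?_⟩
      rw [zpow_one, ← mul_assoc, hp, one_mul]
  | one => left; exact ⟨0, by simp⟩
  | mul y z hy hz ihy ihz =>
    rcases ihy with ⟨k, rfl⟩ | ⟨k, rfl⟩ <;> rcases ihz with ⟨l, rfl⟩ | ⟨l, rfl⟩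
    · left; exact ⟨k + l, (zpow_add _ k l).symm⟩
    · right
      refine ⟨l - k, ?_⟩
      calc (p*q) ^ k * (p * (p*q) ^ l) = p * (p * (p*q) ^ k * p) * (p*q) ^ l := by
            rw [← mul_assoc, ← mul_assoc, ← mul_assoc, hp, one_mul]
        _ = p * (p*q) ^ (l - k) := by
            rw [conj_zpow_inv hp hq, mul_assoc, ← zpow_add, neg_add_eq_sub]
    · right; exact ⟨k + l, by rw [mul_assoc, ← zpow_add]⟩
    · left
      refine ⟨l - k, ?_⟩
      calc p * (p*q) ^ k * (p * (p*q) ^ l) = (p * (p*q) ^ k * p) * (p*q) ^ l := by group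
        _ = (p*q) ^ (l - k) := by rw [conj_zpow_inv hp hq, ← zpow_add, neg_add_eq_sub]
  | inv y hy ihy =>
    rcases ihy with ⟨k, rfl⟩ | ⟨k, rfl⟩
    · left; exact ⟨-k, by rw [zpow_neg]⟩
    · right
      exact ⟨k, by rw [inv_eq_of_mul_eq_one_right (invol_pr hp hq rfl k)]⟩

lemma mem_closure_pair' {p q r : W} (hp : p * p = 1) (hq : q * q = 1) (hr : r = p * q) {x : W}
    (hx : x ∈ Subgroup.closure ({p, q} : Set W)) :
    (∃ k : ℤ, x = r ^ k) ∨ (∃ k : ℤ, x = p * r ^ k) := by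
  subst hr; exact mem_closure_pair hp hq hx

lemma conj_rot {p q r : W} (hp : p * p = 1) (hq : q * q = 1) (hr : r = p * q) (c x : ℤ) :
    r ^ c * (p * r ^ x) * (r ^ c)⁻¹ = p * r ^ (x - 2 * c) := by
  rw [← zpow_neg]
  calc r ^ c * (p * r ^ x) * r ^ (-c)
      = (r ^ c * p) * (r ^ x * r ^ (-c)) := by group
    _ = (p * r ^ (-c)) * r ^ (x + -c) := by rw [zpow_mul_invol hp hq hr, ← zpow_add]
    _ = p * r ^ (x - 2 * c) := by rw [mul_assoc, ← zpow_add]; congr 1; ring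

lemma conj_ref {p q r : W} (hp : p * p = 1) (hq : q * q = 1) (hr : r = p * q) (c x : ℤ) :
    (p * r ^ c) * (p * r ^ x) * (p * r ^ c)⁻¹ = p * r ^ (2 * c - x) := by
  rw [inv_eq_of_mul_eq_one_right (invol_pr hp hq hr c)]
  calc (p * r ^ c) * (p * r ^ x) * (p * r ^ c)
      = p * (r ^ c * (p * r ^ x * p) * r ^ c) := by group
    _ = p * (r ^ c * r ^ (-x) * r ^ c) := by rw [conj_zpow_inv' hp hq hr]
    _ = p * r ^ (2 * c - x) := by rw [← zpow_add, ← zpow_add]; congr 1; ring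

lemma form1 {p q r : W} (hp : p * p = 1) (hq : q * q = 1) (hr : r = p * q) (n : ℕ) :
    (q * p) ^ n * q * r ^ n = p * r ^ (2 * (n : ℤ) + 1) := by
  have hpinv : p⁻¹ = p := inv_eq_of_mul_eq_one_right hp
  have hqinv : q⁻¹ = q := inv_eq_of_mul_eq_one_right hq
  have hqp : (q * p : W) = r⁻¹ := by rw [hr, mul_inv_rev, hpinv, hqinv]
  have h1 : (q * p) ^ n = r ^ (-(n : ℤ)) := by
    rw [hqp, inv_pow, ← zpow_natCast, ← zpow_neg]
  have h2 : (r : W) ^ n = r ^ ((n : ℤ)) := (zpow_natCast _ n).symm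
  have hq' : q = p * r ^ (1 : ℤ) := by rw [zpow_one, hr, ← mul_assoc, hp, one_mul]
  rw [h1, h2, hq']
  calc r ^ (-(n : ℤ)) * (p * r ^ (1 : ℤ)) * r ^ ((n : ℤ))
      = (r ^ (-(n : ℤ)) * p) * r ^ (1 + (n : ℤ)) := by rw [zpow_add]; group
    _ = (p * r ^ ((n : ℤ))) * r ^ (1 + (n : ℤ)) := by rw [zpow_mul_invol hp hq hr, neg_neg]
    _ = p * r ^ (2 * (n : ℤ) + 1) := by rw [mul_assoc, ← zpow_add]; congr 1; ring

lemma form2 {p q r : W} (hp : p * p = 1) (hq : q * q = 1) (hr : r = p * q) (n : ℕ) :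
    r ^ n * p * (q * p) ^ n = p * r ^ (-(2 * (n : ℤ))) := by
  have hpinv : p⁻¹ = p := inv_eq_of_mul_eq_one_right hp
  have hqinv : q⁻¹ = q := inv_eq_of_mul_eq_one_right hq
  have hqp : (q * p : W) = r⁻¹ := by rw [hr, mul_inv_rev, hpinv, hqinv]
  have h1 : (q * p) ^ n = r ^ (-(n : ℤ)) := by
    rw [hqp, inv_pow, ← zpow_natCast, ← zpow_neg]
  have h2 : (r : W) ^ n = r ^ ((n : ℤ)) := (zpow_natCast _ n).symm
  rw [h1, h2]
  calc r ^ ((n : ℤ)) * p * r ^ (-(n : ℤ))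
      = (p * r ^ (-(n : ℤ))) * r ^ (-(n : ℤ)) := by rw [zpow_mul_invol hp hq hr]
    _ = p * r ^ (-(2 * (n : ℤ))) := by rw [mul_assoc, ← zpow_add]; congr 1; ring

lemma zpow_eq_of_dvd {r : W} {x y : ℤ} (h : (orderOf r : ℤ) ∣ x - y) : r ^ x = r ^ y := by
  have h1 : r ^ (x - y) = 1 := orderOf_dvd_iff_zpow_eq_one.mp h
  calc r ^ x = r ^ (y + (x - y)) := by congr 1; ring
    _ = r ^ y * r ^ (x - y) := zpow_add r y (x - y)
    _ = r ^ y := by rw [h1, mul_one]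

lemma order_zpow_eq {r : W} {d e : ℤ} (he : (orderOf r : ℤ) ∣ e * d - 1) :
    orderOf (r ^ d) = orderOf r := by
  apply Nat.dvd_antisymm
  · apply orderOf_dvd_of_pow_eq_one
    have h3 : (r ^ d) ^ (orderOf r) = r ^ (d * orderOf r) := by
      rw [← zpow_natCast (r ^ d), ← zpow_mul]
    rw [h3]
    exact orderOf_dvd_iff_zpow_eq_one.mp (dvd_mul_left _ _)
  · apply orderOf_dvd_of_pow_eq_one
    have h2 : (r ^ d) ^ e = r := by
      rw [← zpow_mul, mul_comm]
      have := zpow_eq_of_dvd (r := r) (x := e * d) (y := 1) (by simpa using he)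
      rw [this, zpow_one]
    have h4 : ∀ (x : W) (a b : ℤ), (x ^ a) ^ b = (x ^ b) ^ a := fun x a b => by
      rw [← zpow_mul, mul_comm, zpow_mul]
    calc r ^ (orderOf (r ^ d)) = ((r ^ d) ^ e) ^ ((orderOf (r ^ d) : ℤ)) := by
          rw [h2, zpow_natCast]
      _ = ((r ^ d) ^ ((orderOf (r ^ d) : ℤ))) ^ e := h4 _ _ _
      _ = 1 := by rw [zpow_natCast, pow_orderOf_eq_one, one_zpow]

lemma conj_image_self {H : Subgroup W} {g : W} (hg : g ∈ H) :
    (fun x => g * x * g⁻¹) '' (H : Set W) = H := by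
  ext x
  constructor
  · rintro ⟨y, hy, rfl⟩; exact mul_mem (mul_mem hg hy) (inv_mem hg)
  · intro hx
    exact ⟨g⁻¹ * x * g, mul_mem (mul_mem (inv_mem hg) hx) hg, by group⟩

lemma image_comp_conj (g w : W) (S : Set W) :
    (fun x => (g * w) * x * (g * w)⁻¹) '' S
      = (fun x => g * x * g⁻¹) '' ((fun x => w * x * w⁻¹) '' S) := by
  rw [← Set.image_comp]
  apply Set.image_congr'
  intro x
  simp only [Function.comp_apply]
  group



lemma arith (m : ℕ) (d e : ℤ) (h : (m : ℤ) ∣ e * d - 1) :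
    ∃ n : ℕ, (Even m → n ≤ (m - 1) / 4) ∧ (Odd m → n ≤ (m - 3) / 2) ∧
      ((m : ℤ) ∣ d - (2 * n + 1) ∨ (m : ℤ) ∣ d + (2 * n + 1)) := by
  rcases Nat.eq_zero_or_pos m with rfl | hm0
  · refine ⟨0, by simp, by simp, ?_⟩
    have hed : e * d - 1 = 0 := by exact_mod_cast zero_dvd_iff.mp h
    have hud : IsUnit d := IsUnit.of_mul_eq_one (a := d) e (by linarith [mul_comm e d])
    rcases Int.isUnit_iff.mp hud with rfl | rfl
    · left; simp
    · right; simp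
  rcases eq_or_lt_of_le (Nat.succ_le_of_lt hm0 : 1 ≤ m) with h1 | hm2
  · exact ⟨0, fun _ => by omega, fun _ => by omega, Or.inl (by rw [← h1]; exact one_dvd _)⟩
  have hmz : (m : ℤ) ≠ 0 := by positivity
  set d₀ : ℕ := (d % (m : ℤ)).toNat with hd₀def
  have hmod1 : 0 ≤ d % (m : ℤ) := Int.emod_nonneg d hmz
  have hmod2 : d % (m : ℤ) < m := Int.emod_lt_of_pos d (by exact_mod_cast hm0)
  have hd₀ : (d₀ : ℤ) = d % (m : ℤ) := Int.toNat_of_nonneg hmod1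
  have hdvd0 : (m : ℤ) ∣ d - (d₀ : ℤ) := by
    rw [hd₀, Int.emod_def]; ring_nf; exact Dvd.intro _ rfl
  have hd₀lt : d₀ < m := by omega
  have hd₀ne : d₀ ≠ 0 := by
    intro h0
    have h2 : (m : ℤ) ∣ d := by rw [h0] at hdvd0; simpa using hdvd0
    have h3 : (m : ℤ) ∣ 1 := by
      have h4 : (m : ℤ) ∣ e * d := h2.mul_left e
      have := dvd_sub h4 h
      simpa using this
    have : (m : ℤ) ≤ 1 := Int.le_of_dvd one_pos h3
    omega
  rcases Nat.even_or_odd m with hme | hmo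
  · -- m even; then d₀ is odd
    obtain ⟨m2, hm2'⟩ := hme
    have hd₀odd : Odd d₀ := by
      have h2m : (2 : ℤ) ∣ (m : ℤ) := ⟨m2, by push_cast; omega⟩
      obtain ⟨c1, hc1⟩ := dvd_trans h2m h
      obtain ⟨c2, hc2⟩ := dvd_trans h2m hdvd0
      have hdodd : Odd d := by
        rcases Int.even_or_odd d with hde | hdo
        · exfalso
          obtain ⟨x, hx⟩ := hde.mul_left e
          omega
        · exact hdo
      obtain ⟨dk, hdk⟩ := hdodd
      rcases Nat.even_or_odd d₀ with ⟨ek, hek⟩ | hodd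
      · exfalso; omega
      · exact hodd
    obtain ⟨dodd, hdodd'⟩ := hd₀odd
    by_cases hc : 2 * d₀ ≤ m
    · refine ⟨d₀ / 2, fun _ => by omega, fun hodd => by omega, Or.inl ?_⟩
      have he : (2 * (↑(d₀ / 2) : ℤ) + 1) = (d₀ : ℤ) := by push_cast; omega
      rw [he]; exact hdvd0
    · refine ⟨(m - d₀) / 2, fun _ => by omega, fun hodd => by omega, Or.inr ?_⟩
      have he : (2 * (↑((m - d₀) / 2) : ℤ) + 1) = (m : ℤ) - (d₀ : ℤ) := by push_cast; omega
      rw [he]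
      have h5 : d + ((m : ℤ) - d₀) = (d - d₀) + m := by ring
      rw [h5]
      exact dvd_add hdvd0 dvd_rfl
  · -- m odd
    obtain ⟨mk, hmk⟩ := hmo
    rcases Nat.even_or_odd d₀ with ⟨ek, hek⟩ | ⟨ok, hok⟩
    · refine ⟨(m - d₀) / 2, fun heven => by obtain ⟨l, hl⟩ := heven; omega,
        fun _ => by omega, Or.inr ?_⟩
      have he : (2 * (↑((m - d₀) / 2) : ℤ) + 1) = (m : ℤ) - (d₀ : ℤ) := by push_cast; omega
      rw [he]
      have h5 : d + ((m : ℤ) - d₀) = (d - d₀) + m := by ring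
      rw [h5]
      exact dvd_add hdvd0 dvd_rfl
    · refine ⟨d₀ / 2, fun heven => by obtain ⟨l, hl⟩ := heven; omega,
        fun _ => by omega, Or.inl ?_⟩
      have he : (2 * (↑(d₀ / 2) : ℤ) + 1) = (d₀ : ℤ) := by push_cast; omega
      rw [he]; exact hdvd0

lemma bound_transfer {m₀ m n : ℕ} (hdvd : m₀ ∣ m) (hm : m ≠ 0)
    (hb1 : Even m₀ → n ≤ (m₀ - 1) / 4) (hb2 : Odd m₀ → n ≤ (m₀ - 3) / 2) :
    (Even m → n ≤ (m - 1) / 4) ∧ (Odd m → n ≤ (m - 3) / 2) := by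
  have hmle : m₀ ≤ m := Nat.le_of_dvd (Nat.pos_of_ne_zero hm) hdvd
  rcases Nat.even_or_odd m₀ with he | ho
  · have hme : Even m := by
      obtain ⟨k, hk⟩ := he
      obtain ⟨c, hc⟩ := dvd_trans (⟨k, by omega⟩ : 2 ∣ m₀) hdvd
      exact ⟨c, by omega⟩
    have hb := hb1 he
    refine ⟨fun _ => by omega, fun hmo => absurd hme (Nat.not_even_iff_odd.mpr hmo)⟩
    -- monotone: (m₀-1)/4 ≤ (m-1)/4
  · have hb := hb2 ho
    obtain ⟨k, hk⟩ := ho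
    constructor
    · intro hme
      obtain ⟨l, hl⟩ := hme
      have hne : m₀ ≠ m := by omega
      have hle : 2 * m₀ ≤ m := by
        obtain ⟨c, rfl⟩ := hdvd
        have hc : 2 ≤ c := by
          rcases c with _ | _ | c
          · omega
          · omega
          · omega
        calc 2 * m₀ = m₀ * 2 := by ring
          _ ≤ m₀ * c := Nat.mul_le_mul_left _ hc
      omega
    · intro _; omega


end Helpers

section MainProof

variable [Group W]

private theorem dihedral_main
    {M : CoxeterMatrix B} {M' : CoxeterMatrix B'}
    (cs : CoxeterSystem M W) (cs' : CoxeterSystem M' W)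
    (href : ∀ t : W, cs.IsReflection t ↔ cs'.IsReflection t)
    {i j : B} (hij : i ≠ j) (hfin : M i j ≠ 0)
    {i' j' : B'} (w : W)
    (hw : (fun x => w * x * w⁻¹) ''
            ((Subgroup.closure {cs.simple i, cs.simple j} : Subgroup W) : Set W)
          = ((Subgroup.closure {cs'.simple i', cs'.simple j'} : Subgroup W) : Set W)) :
    (∃ a b : W, ({a, b} : Set W) = {cs'.simple i', cs'.simple j'} ∧
      ∃ w' : W,
        (fun x => w' * x * w'⁻¹) ''
            ((Subgroup.closure {cs.simple i, cs.simple j} : Subgroup W) : Set W)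
          = ((Subgroup.closure {cs'.simple i', cs'.simple j'} : Subgroup W) : Set W) ∧
        ∃ n : ℕ,
          (Even (M i j) → n ≤ (M i j - 1) / 4) ∧
          (Odd (M i j) → n ≤ (M i j - 3) / 2) ∧
          w' * cs.simple i * w'⁻¹ = a ∧
          w' * cs.simple j * w'⁻¹ = (b * a) ^ n * b * (a * b) ^ n) := by
  set s := cs.simple i with hs_def
  set t := cs.simple j with ht_def
  set s' := cs'.simple i' with hs'_def
  set t' := cs'.simple j' with ht'_def
  set u := w * s * w⁻¹ with hu_def
  set v := w * t * w⁻¹ with hv_def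
  set r := s' * t' with hr_def
  have hs2 : s * s = 1 := cs.simple_mul_simple_self i
  have ht2 : t * t = 1 := cs.simple_mul_simple_self j
  have hs'2 : s' * s' = 1 := cs'.simple_mul_simple_self i'
  have ht'2 : t' * t' = 1 := cs'.simple_mul_simple_self j'
  -- reflections
  have hu_refl : cs'.IsReflection u := (href u).mp ((cs.isReflection_simple i).conj w)
  have hv_refl : cs'.IsReflection v := (href v).mp ((cs.isReflection_simple j).conj w)
  have hu2 : u * u = 1 := hu_refl.mul_self
  have hv2 : v * v = 1 := hv_refl.mul_self
  -- the conjugation map as a monoid hom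
  have hfun : ⇑(MulAut.conj w).toMonoidHom = fun x => w * x * w⁻¹ := by
    funext x; simp [MulAut.conj_apply]
  have hmapD : (Subgroup.closure {s, t}).map (MulAut.conj w).toMonoidHom
      = Subgroup.closure {u, v} := by
    rw [MonoidHom.map_closure]
    congr 1
    rw [hfun, Set.image_pair, hu_def, hv_def]
  have hD : Subgroup.closure {u, v} = Subgroup.closure {s', t'} := by
    apply SetLike.ext'
    rw [← hmapD, Subgroup.coe_map, hfun, hw]
  -- parity facts
  have hrefl_par : ∀ x : W, cs'.IsReflection x →
      cs'.lengthParity x = Multiplicative.ofAdd 1 := by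
    rintro x ⟨y, i₀, rfl⟩
    rw [map_mul, map_mul, map_inv, CoxeterSystem.lengthParity_simple,
      mul_comm (cs'.lengthParity y), mul_assoc, mul_inv_cancel, mul_one]
  have hrot_par : ∀ k : ℤ, cs'.lengthParity (r ^ k) = 1 := by
    intro k
    rw [map_zpow]
    have h1 : cs'.lengthParity r = 1 := by
      rw [hr_def, hs'_def, ht'_def, map_mul, CoxeterSystem.lengthParity_simple,
        CoxeterSystem.lengthParity_simple]
      decide
    rw [h1, one_zpow]
  have hofadd_ne : (Multiplicative.ofAdd (1 : ZMod 2)) ≠ 1 := by decide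
  -- normal forms for u and v
  have hu_mem : u ∈ Subgroup.closure {s', t'} := by
    rw [← hD]; exact Subgroup.subset_closure (Set.mem_insert _ _)
  have hv_mem : v ∈ Subgroup.closure {s', t'} := by
    rw [← hD]; exact Subgroup.subset_closure (Set.mem_insert_of_mem _ rfl)
  obtain ⟨α, hα⟩ : ∃ α : ℤ, u = s' * r ^ α := by
    rcases mem_closure_pair' hs'2 ht'2 hr_def hu_mem with ⟨k, hk⟩ | h
    · exact absurd (by rw [← hrefl_par u hu_refl, hk, hrot_par]) hofadd_ne
    · exact h
  obtain ⟨β, hβ⟩ : ∃ β : ℤ, v = s' * r ^ β := by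
    rcases mem_closure_pair' hs'2 ht'2 hr_def hv_mem with ⟨k, hk⟩ | h
    · exact absurd (by rw [← hrefl_par v hv_refl, hk, hrot_par]) hofadd_ne
    · exact h
  set d := β - α with hd_def
  have huv : u * v = r ^ d := by
    rw [hα, hβ]
    calc (s' * r ^ α) * (s' * r ^ β) = (s' * r ^ α * s') * r ^ β := by group
      _ = r ^ (-α) * r ^ β := by rw [conj_zpow_inv' hs'2 ht'2 hr_def]
      _ = r ^ d := by rw [← zpow_add, hd_def]; congr 1; ring
  -- order facts
  have hord_st : orderOf (u * v) = orderOf (s * t) := by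
    have h1 : u * v = (MulAut.conj w).toMonoidHom (s * t) := by
      rw [hfun, hu_def, hv_def]; group
    rw [h1]
    exact orderOf_injective _ (MulAut.conj w).injective (s * t)
  set m₀ := orderOf (s * t) with hm₀_def
  have hm₀dvd : m₀ ∣ M i j := orderOf_dvd_of_pow_eq_one (cs.simple_mul_simple_pow i j)
  -- s' and t' in terms of u, v
  have hs'_mem : s' ∈ Subgroup.closure {u, v} := by
    rw [hD]; exact Subgroup.subset_closure (Set.mem_insert _ _)
  have ht'_mem : t' ∈ Subgroup.closure {u, v} := by
    rw [hD]; exact Subgroup.subset_closure (Set.mem_insert_of_mem _ rfl)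
  have huv_pow : ∀ k : ℤ, (u * v) ^ k = r ^ (d * k) := by
    intro k; rw [huv, ← zpow_mul]
  obtain ⟨k₁, hk₁⟩ : ∃ k : ℤ, (orderOf r : ℤ) ∣ α + d * k := by
    rcases mem_closure_pair' hu2 hv2 rfl hs'_mem with ⟨k, hk⟩ | ⟨k, hk⟩
    · rw [huv_pow] at hk
      exact absurd (by rw [← hrefl_par s' (cs'.isReflection_simple i'), hk, hrot_par]) hofadd_ne
    · rw [huv_pow, hα, mul_assoc, ← zpow_add] at hk
      exact ⟨k, orderOf_dvd_iff_zpow_eq_one.mpr (left_eq_mul.mp hk)⟩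
  obtain ⟨k₂, hk₂⟩ : ∃ k : ℤ, (orderOf r : ℤ) ∣ α + d * k - 1 := by
    rcases mem_closure_pair' hu2 hv2 rfl ht'_mem with ⟨k, hk⟩ | ⟨k, hk⟩
    · rw [huv_pow] at hk
      exact absurd (by rw [← hrefl_par t' (cs'.isReflection_simple j'), hk, hrot_par]) hofadd_ne
    · rw [huv_pow, hα, mul_assoc, ← zpow_add] at hk
      have ht'r : t' = s' * r ^ (1 : ℤ) := by
        rw [zpow_one, hr_def, ← mul_assoc, hs'2, one_mul]
      rw [ht'r] at hk
      have h2 : r ^ (1 : ℤ) = r ^ (α + d * k) := mul_left_cancel hk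
      refine ⟨k, orderOf_dvd_iff_zpow_eq_one.mpr ?_⟩
      have h3 : r ^ (α + d * k - 1) = r ^ (α + d * k) * (r ^ (1:ℤ))⁻¹ := by
        rw [← zpow_neg, ← zpow_add, sub_eq_add_neg]
      rw [h3, ← h2]
      exact mul_inv_cancel _
  have he : (orderOf r : ℤ) ∣ (k₂ - k₁) * d - 1 := by
    have h1 := dvd_sub hk₂ hk₁
    have h2 : (α + d * k₂ - 1) - (α + d * k₁) = (k₂ - k₁) * d - 1 := by ring
    rwa [h2] at h1
  have hordr : orderOf r = m₀ := by
    have h1 : orderOf (r ^ d) = orderOf r := order_zpow_eq he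
    have h2 := hord_st
    rw [huv] at h2
    rw [← h1, h2]
  rw [hordr] at he hk₁ hk₂
  -- arithmetic
  obtain ⟨n, hb1, hb2, hdvd⟩ := arith m₀ d (k₂ - k₁) he
  obtain ⟨hB1, hB2⟩ := bound_transfer hm₀dvd hfin hb1 hb2
  have hred : ∀ x y : ℤ, (m₀ : ℤ) ∣ x - y → r ^ x = r ^ y := by
    intro x y hxy
    exact zpow_eq_of_dvd (by rw [hordr]; exact hxy)
  -- choice of ε and c
  obtain ⟨ε, c, hε01, hεc⟩ : ∃ ε c : ℤ, (ε = 0 ∨ ε = 1) ∧ (m₀ : ℤ) ∣ α - 2 * c - ε := by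
    rcases Int.even_or_odd α with ⟨x, hx⟩ | ⟨x, hx⟩
    · refine ⟨0, x, Or.inl rfl, ?_⟩
      have h0 : α - 2 * x - 0 = 0 := by omega
      rw [h0]; exact dvd_zero _
    · rcases Nat.even_or_odd m₀ with hm₀e | ⟨mk, hmk⟩
      · refine ⟨1, x, Or.inr rfl, ?_⟩
        have h0 : α - 2 * x - 1 = 0 := by omega
        rw [h0]; exact dvd_zero _
      · refine ⟨0, x + mk + 1, Or.inl rfl, ?_⟩
        have h0 : α - 2 * (x + mk + 1) - 0 = -(m₀ : ℤ) := by omega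
        rw [h0]; exact dvd_neg.mpr dvd_rfl
  -- memberships for the final conjugator
  have hs'D : s' ∈ Subgroup.closure {s', t'} := Subgroup.subset_closure (Set.mem_insert _ _)
  have ht'D : t' ∈ Subgroup.closure {s', t'} :=
    Subgroup.subset_closure (Set.mem_insert_of_mem _ rfl)
  have hrD : r ∈ Subgroup.closure {s', t'} := hr_def ▸ mul_mem hs'D ht'D
  have hKimg : ∀ g : W, g ∈ Subgroup.closure {s', t'} →
      (fun x => (g * w) * x * (g * w)⁻¹) ''
        ((Subgroup.closure {s, t} : Subgroup W) : Set W)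
        = ((Subgroup.closure {s', t'} : Subgroup W) : Set W) := by
    intro g hg
    rw [image_comp_conj, hw, conj_image_self hg]
  have hgws : ∀ g : W, (g * w) * s * (g * w)⁻¹ = g * u * g⁻¹ := by
    intro g; rw [hu_def]; group
  have hgwt : ∀ g : W, (g * w) * t * (g * w)⁻¹ = g * v * g⁻¹ := by
    intro g; rw [hv_def]; group
  have ht'r : t' = s' * r ^ (1 : ℤ) := by
    rw [zpow_one, hr_def, ← mul_assoc, hs'2, one_mul]
  rcases hε01 with rfl | rfl
  · -- ε = 0 : targets (s', t')
    simp only [sub_zero] at hεc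
    rcases hdvd with hL | hR
    · -- rotation conjugator
      refine ⟨s', t', rfl, r ^ c * w, hKimg _ (zpow_mem hrD c), n, hB1, hB2, ?_, ?_⟩
      · rw [hgws, hα, conj_rot hs'2 ht'2 hr_def,
          hred (α - 2 * c) 0 (by simpa using hεc), zpow_zero, mul_one]
      · rw [hgwt, hβ, conj_rot hs'2 ht'2 hr_def, form1 hs'2 ht'2 hr_def n]
        congr 1
        apply hred
        have h2 : β - 2 * c - (2 * (n : ℤ) + 1) = (α - 2 * c) + (d - (2 * n + 1)) := by
          rw [hd_def]; ring
        rw [h2]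
        exact dvd_add hεc hL
    · -- reflection conjugator
      refine ⟨s', t', rfl, (s' * r ^ c) * w,
        hKimg _ (mul_mem hs'D (zpow_mem hrD c)), n, hB1, hB2, ?_, ?_⟩
      · rw [hgws, hα, conj_ref hs'2 ht'2 hr_def,
          hred (2 * c - α) 0 (by
            have h2 : 2 * c - α - 0 = -(α - 2 * c) := by ring
            rw [h2]; exact dvd_neg.mpr hεc), zpow_zero, mul_one]
      · rw [hgwt, hβ, conj_ref hs'2 ht'2 hr_def, form1 hs'2 ht'2 hr_def n]
        congr 1
        apply hred
        have h2 : 2 * c - β - (2 * (n : ℤ) + 1) = -(α - 2 * c) - (d + (2 * n + 1)) := by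
          rw [hd_def]; ring
        rw [h2]
        exact dvd_sub (dvd_neg.mpr hεc) hR
  · -- ε = 1 : targets (t', s')
    rcases hdvd with hL | hR
    · -- reflection conjugator with exponent c + 1
      refine ⟨t', s', Set.pair_comm t' s', (s' * r ^ (c + 1)) * w,
        hKimg _ (mul_mem hs'D (zpow_mem hrD (c + 1))), n, hB1, hB2, ?_, ?_⟩
      · rw [hgws, hα, conj_ref hs'2 ht'2 hr_def,
          hred (2 * (c + 1) - α) 1 (by
            have h2 : 2 * (c + 1) - α - 1 = -(α - 2 * c - 1) := by ring
            rw [h2]; exact dvd_neg.mpr hεc), ← ht'r]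
      · rw [hgwt, hβ, conj_ref hs'2 ht'2 hr_def, form2 hs'2 ht'2 hr_def n]
        congr 1
        apply hred
        have h2 : 2 * (c + 1) - β - (-(2 * (n : ℤ))) = -(α - 2 * c - 1) - (d - (2 * n + 1)) := by
          rw [hd_def]; ring
        rw [h2]
        exact dvd_sub (dvd_neg.mpr hεc) hL
    · -- rotation conjugator
      refine ⟨t', s', Set.pair_comm t' s', r ^ c * w,
        hKimg _ (zpow_mem hrD c), n, hB1, hB2, ?_, ?_⟩
      · rw [hgws, hα, conj_rot hs'2 ht'2 hr_def,
          hred (α - 2 * c) 1 hεc, ← ht'r]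
      · rw [hgwt, hβ, conj_rot hs'2 ht'2 hr_def, form2 hs'2 ht'2 hr_def n]
        congr 1
        apply hred
        have h2 : β - 2 * c - (-(2 * (n : ℤ))) = (α - 2 * c - 1) + (d + (2 * n + 1)) := by
          rw [hd_def]; ring
        rw [h2]
        exact dvd_add hεc hR

end MainProof


/-- Two Coxeter systems on the same group `W` yield the same reflections. -/
def SameReflections [Group W] {M : CoxeterMatrix B} {M' : CoxeterMatrix B'}
    (cs : CoxeterSystem M W) (cs' : CoxeterSystem M' W) : Prop :=
  ∀ t : W, cs.IsReflection t ↔ cs'.IsReflection t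

/-- **Lemma.** Suppose `(W,S)` and `(W,S')` yield the same reflections, `m = m(s,t) < ∞`,
and `w W_{{s,t}} w⁻¹ = W_{{s',t'}}`.  Then, after possibly interchanging `s'` and `t'`
(the pair `{a, b}` below), there is a `w'` conjugating `W_{{s,t}}` onto `W_{{s',t'}}`
with `w' s w'⁻¹ = a` and `w' t w'⁻¹ = (ba)^j b (ab)^j` for some
`0 ≤ j ≤ ⌊(m-1)/4⌋` (`m` even) resp. `0 ≤ j ≤ (m-3)/2` (`m` odd).  In particular, for
`m ∈ {2,3,4}` one can take `w' s w'⁻¹ = a` and `w' t w'⁻¹ = b`. -/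
theorem dihedral_conjugation_normal_form
    [Group W] {M : CoxeterMatrix B} {M' : CoxeterMatrix B'}
    (cs : CoxeterSystem M W) (cs' : CoxeterSystem M' W)
    (href : SameReflections cs cs')
    {i j : B} (hij : i ≠ j) (hfin : M i j ≠ 0)
    {i' j' : B'} (w : W)
    (hw : (fun x => w * x * w⁻¹) ''
            ((Subgroup.closure {cs.simple i, cs.simple j} : Subgroup W) : Set W)
          = ((Subgroup.closure {cs'.simple i', cs'.simple j'} : Subgroup W) : Set W)) :
    (∃ a b : W, ({a, b} : Set W) = {cs'.simple i', cs'.simple j'} ∧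
      ∃ w' : W,
        (fun x => w' * x * w'⁻¹) ''
            ((Subgroup.closure {cs.simple i, cs.simple j} : Subgroup W) : Set W)
          = ((Subgroup.closure {cs'.simple i', cs'.simple j'} : Subgroup W) : Set W) ∧
        ∃ n : ℕ,
          (Even (M i j) → n ≤ (M i j - 1) / 4) ∧
          (Odd (M i j) → n ≤ (M i j - 3) / 2) ∧
          w' * cs.simple i * w'⁻¹ = a ∧
          w' * cs.simple j * w'⁻¹ = (b * a) ^ n * b * (a * b) ^ n) ∧
    (M i j = 2 ∨ M i j = 3 ∨ M i j = 4 →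
      ∃ a b : W, ({a, b} : Set W) = {cs'.simple i', cs'.simple j'} ∧
        ∃ w' : W, w' * cs.simple i * w'⁻¹ = a ∧ w' * cs.simple j * w'⁻¹ = b) := by
  have hmain := dihedral_main cs cs' href hij hfin w hw
  refine ⟨hmain, ?_⟩
  intro hm234
  obtain ⟨a, b, hab, w', _, n, hb1, hb2, hwa, hwb⟩ := hmain
  have hn : n = 0 := by
    rcases hm234 with h | h | h
    · rw [h] at hb1; have := hb1 ⟨1, rfl⟩; omega
    · rw [h] at hb2; have := hb2 ⟨1, rfl⟩; omega
    · rw [h] at hb1; have := hb1 ⟨2, rfl⟩; omega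
  subst hn
  exact ⟨a, b, hab, w', hwa, by simpa using hwb⟩

end CoxRigid
end

section
/- Let W be the Coxeter group of type Ã₂, i.e., the group with Coxeter system (W,{p,q,r}) where m(p,q) = m(q,r) = m(p,r) = 3. Then the subgroup of W generated by {p, q, r p q p r} is a proper subgroup of W. -/
open CoxeterSystem

namespace CoxRigid

/-- The Coxeter matrix of affine type Ã₂: three generators, all pairwise orders equal to 3. -/
def A2affine : CoxeterMatrix (Fin 3) where
  M := Matrix.of fun i j => if i = j then 1 else 3
  isSymm := by
    ext i j
    by_cases h : i = j <;> simp [Matrix.transpose_apply, h, eq_comm]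
  diagonal i := by simp
  off_diagonal i j h := by simp [h]

abbrev V := ZMod 2 × ZMod 2

def gp : Equiv.Perm V :=
  ⟨fun x => (x.1 + x.2, x.2), fun x => (x.1 + x.2, x.2), by decide, by decide⟩

def gq : Equiv.Perm V :=
  ⟨fun x => (x.1, x.1 + x.2), fun x => (x.1, x.1 + x.2), by decide, by decide⟩

def gr : Equiv.Perm V :=
  ⟨fun x => (x.2 + 1, x.1 + 1), fun x => (x.2 + 1, x.1 + 1), by decide, by decide⟩

def g : Fin 3 → Equiv.Perm V := ![gp, gq, gr]

lemma liftable : A2affine.IsLiftable g := by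
  intro i j
  fin_cases i <;> fin_cases j <;> refine Equiv.ext fun x => ?_ <;> revert x <;> decide

/-- **Lemma.** In the Coxeter group `W` of type Ã₂ with fundamental generators `p, q, r`,
the subgroup generated by `{p, q, r p q p r}` is proper (`W` of type Ã₂ is not cohopfian). -/
theorem A2affine_proper_subgroup {W : Type*} [Group W] (cs : CoxeterSystem A2affine W) :
    Subgroup.closure {cs.simple 0, cs.simple 1,
        cs.simple 2 * cs.simple 0 * cs.simple 1 * cs.simple 0 * cs.simple 2} ≠ ⊤ := by
  intro h
  set f : W →* Equiv.Perm V := cs.lift ⟨g, liftable⟩ with hf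
  have hs : ∀ i, f (cs.simple i) = g i := fun i => cs.lift_apply_simple liftable i
  have hle : Subgroup.closure {cs.simple 0, cs.simple 1,
      cs.simple 2 * cs.simple 0 * cs.simple 1 * cs.simple 0 * cs.simple 2} ≤
      (MulAction.stabilizer (Equiv.Perm V) ((0 : ZMod 2), (0 : ZMod 2))).comap f := by
    rw [Subgroup.closure_le]
    rintro x (rfl | rfl | rfl) <;>
      simp only [SetLike.mem_coe, Subgroup.mem_comap, MulAction.mem_stabilizer_iff, map_mul, hs] <;>
      decide
  have h2 : cs.simple 2 ∈
      (MulAction.stabilizer (Equiv.Perm V) ((0 : ZMod 2), (0 : ZMod 2))).comap f :=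
    hle (h ▸ Subgroup.mem_top _)
  rw [Subgroup.mem_comap, MulAction.mem_stabilizer_iff, hs] at h2
  exact absurd h2 (by decide)

end CoxRigid
end
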